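/- For every natural number k, the convex hull of the incidence vectors of the independent sets of M of cardinality at most k equals the set of all x ∈ ℝ^E satisfying x(F) ≤ r(F) for all nonempty F ⊆ E, x(E) ≤ k, and x_e ≥ 0 for all e ∈ E. -/

import Mathlib

open Finset

/-- A (loopless) matroid on a finite ground set, given by its independent sets. -/
structure FinMatroid (α : Type*) [Fintype α] [DecidableEq α] where
  Indep : Finset α → Prop
  empty_indep : Indep ∅
  subset_indep : ∀ ⦃I J : Finset α⦄, Indep J → I ⊆ J → Indep I
  exchange : ∀ ⦃I J : Finset α⦄, Indep I → Indep J → I.card < J.card →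
    ∃ e ∈ J \ I, Indep (insert e I)
  loopless : ∀ e : α, Indep {e}

variable {α : Type*} [Fintype α] [DecidableEq α]

open Classical in
/-- The rank of a set: the maximum cardinality of an independent subset. -/
noncomputable def FinMatroid.r (M : FinMatroid α) (F : Finset α) : ℕ :=
  (F.powerset.filter M.Indep).sup Finset.card

/-- incidence vector -/
noncomputable def incVec (I : Finset α) : α → ℝ := fun e => if e ∈ I then 1 else 0

/-- x(S) = ∑_{e ∈ S} x_e -/
noncomputable def fsum (x : α → ℝ) (S : Finset α) : ℝ := ∑ e ∈ S, x e

/-- closed set -/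
def FinMatroid.ClosedSet (M : FinMatroid α) (F : Finset α) : Prop :=
  ∀ e ∉ F, M.r F < M.r (insert e F)

/-- F is separable -/
def FinMatroid.Separable (M : FinMatroid α) (F : Finset α) : Prop :=
  ∃ F₁ F₂ : Finset α, F₁ ≠ ∅ ∧ F₂ ≠ ∅ ∧ Disjoint F₁ F₂ ∧ F₁ ∪ F₂ = F ∧
    M.r F₁ + M.r F₂ ≤ M.r F

def FinMatroid.Inseparable (M : FinMatroid α) (F : Finset α) : Prop :=
  ¬ M.Separable F

/-- the k-rank r^k(F) = k - r(E \ F), as an integer -/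
noncomputable def FinMatroid.krank (M : FinMatroid α) (k : ℕ) (F : Finset α) : ℤ :=
  (k : ℤ) - (M.r Fᶜ : ℤ)

/-- F is k-separable -/
noncomputable def FinMatroid.kSeparable (M : FinMatroid α) (k : ℕ) (F : Finset α) : Prop :=
  ∃ F₁ F₂ : Finset α, F₁ ≠ ∅ ∧ F₂ ≠ ∅ ∧ Disjoint F₁ F₂ ∧ F₁ ∪ F₂ = F ∧
    M.krank k F₁ + M.krank k F₂ = M.krank k F

noncomputable def FinMatroid.kInseparable (M : FinMatroid α) (k : ℕ) (F : Finset α) : Prop :=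
  ¬ M.kSeparable k F

/-- convex hull of incidence vectors of independent sets of cardinality exactly k -/
noncomputable def exactPolytope (M : FinMatroid α) (k : ℕ) : Set (α → ℝ) :=
  convexHull ℝ {x | ∃ I : Finset α, M.Indep I ∧ I.card = k ∧ x = incVec I}

/-- the cardinality constrained matroid polytope P^c(E) -/
noncomputable def cardPolytope (M : FinMatroid α) {m : ℕ} (c : Fin m → ℕ) : Set (α → ℝ) :=
  convexHull ℝ {x | ∃ I : Finset α, M.Indep I ∧ (∃ p : Fin m, I.card = c p) ∧ x = incVec I}

/-- dimension of (the affine hull of) a subset of ℝ^E -/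
noncomputable def polyDim (s : Set (α → ℝ)) : ℕ :=
  Module.finrank ℝ (affineSpan ℝ s).direction

/-- `a · x ≤ a₀` defines a facet of `P` -/
noncomputable def IsFacet (P : Set (α → ℝ)) (a : α → ℝ) (a₀ : ℝ) : Prop :=
  (∀ x ∈ P, ∑ e, a e * x e ≤ a₀) ∧
  polyDim {x ∈ P | ∑ e, a e * x e = a₀} + 1 = polyDim P



set_option linter.unusedSectionVars false
set_option maxHeartbeats 1000000

section MatroidPolytopeAux

variable {α : Type*} [Fintype α] [DecidableEq α]

open Classical in
/-- rank function of an arbitrary independence predicate -/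
noncomputable def rkOf (Indep : Finset α → Prop) (F : Finset α) : ℕ :=
  (F.powerset.filter Indep).sup Finset.card

/-- the linear-inequality polytope of an independence predicate -/
def polyOf (Indep : Finset α → Prop) : Set (α → ℝ) :=
  {x | (∀ F : Finset α, fsum x F ≤ (rkOf Indep F : ℝ)) ∧ ∀ e, 0 ≤ x e}

section rkLemmas
variable {Indep : Finset α → Prop}

open Classical in
theorem card_le_rkOf {I F : Finset α} (hI : Indep I) (hIF : I ⊆ F) :
    I.card ≤ rkOf Indep F := by
  apply Finset.le_sup
  simp [Finset.mem_filter, Finset.mem_powerset, hI, hIF]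

open Classical in
theorem exists_rkOf_basis (hem : Indep ∅) (F : Finset α) :
    ∃ I, I ⊆ F ∧ Indep I ∧ I.card = rkOf Indep F := by
  obtain ⟨I, hI, hEq⟩ := Finset.exists_mem_eq_sup (F.powerset.filter Indep)
    ⟨∅, by simp [hem]⟩ Finset.card
  simp only [Finset.mem_filter, Finset.mem_powerset] at hI
  exact ⟨I, hI.1, hI.2, hEq.symm⟩

theorem rkOf_le_card (F : Finset α) : rkOf Indep F ≤ F.card := by
  classical
  apply Finset.sup_le
  intro I hI
  simp only [Finset.mem_filter, Finset.mem_powerset] at hI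
  exact Finset.card_le_card hI.1

/-- extension of an independent subset of F to a basis of F -/
theorem exists_rkOf_ext (hem : Indep ∅)
    (hex : ∀ ⦃I J : Finset α⦄, Indep I → Indep J → I.card < J.card →
      ∃ e ∈ J \ I, Indep (insert e I))
    {I F : Finset α} (hI : Indep I) (hIF : I ⊆ F) :
    ∃ B, I ⊆ B ∧ B ⊆ F ∧ Indep B ∧ B.card = rkOf Indep F := by
  by_cases h : I.card = rkOf Indep F
  · exact ⟨I, Finset.Subset.rfl, hIF, hI, h⟩
  · have hlt : I.card < rkOf Indep F := lt_of_le_of_ne (card_le_rkOf hI hIF) h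
    obtain ⟨J, hJF, hJ, hJcard⟩ := exists_rkOf_basis hem F
    obtain ⟨e, he, heI⟩ := hex hI hJ (by omega)
    have heF : e ∈ F := hJF (Finset.mem_sdiff.mp he).1
    have hcard : (insert e I).card = I.card + 1 :=
      Finset.card_insert_of_notMem (Finset.mem_sdiff.mp he).2
    have : rkOf Indep F - (insert e I).card < rkOf Indep F - I.card := by omega
    obtain ⟨B, hB1, hB2, hB3, hB4⟩ := exists_rkOf_ext hem hex heI
      (Finset.insert_subset heF hIF)
    exact ⟨B, (Finset.subset_insert e I).trans hB1, hB2, hB3, hB4⟩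
termination_by rkOf Indep F - I.card

theorem rkOf_submod (hem : Indep ∅)
    (hsub : ∀ ⦃I J : Finset α⦄, Indep J → I ⊆ J → Indep I)
    (hex : ∀ ⦃I J : Finset α⦄, Indep I → Indep J → I.card < J.card →
      ∃ e ∈ J \ I, Indep (insert e I))
    (A B : Finset α) :
    rkOf Indep (A ∪ B) + rkOf Indep (A ∩ B) ≤ rkOf Indep A + rkOf Indep B := by
  obtain ⟨I, hIAB, hI, hIcard⟩ := exists_rkOf_basis hem (A ∩ B)
  obtain ⟨J, hIJ, hJAB, hJ, hJcard⟩ := exists_rkOf_ext hem hex hI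
    (hIAB.trans Finset.inter_subset_union)
  have h1 : (J ∩ A).card ≤ rkOf Indep A :=
    card_le_rkOf (hsub hJ Finset.inter_subset_left) Finset.inter_subset_right
  have h2 : (J ∩ B).card ≤ rkOf Indep B :=
    card_le_rkOf (hsub hJ Finset.inter_subset_left) Finset.inter_subset_right
  have hu : (J ∩ A) ∪ (J ∩ B) = J := by
    rw [← Finset.inter_union_distrib_left]
    exact Finset.inter_eq_left.mpr hJAB
  have hi : (J ∩ A) ∩ (J ∩ B) = J ∩ (A ∩ B) := by
    ext x; simp [Finset.mem_inter]; tauto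
  have hIsub : I ⊆ J ∩ (A ∩ B) := Finset.subset_inter hIJ hIAB
  have := Finset.card_union_add_card_inter (J ∩ A) (J ∩ B)
  rw [hu, hi] at this
  have hcard2 : rkOf Indep (A ∩ B) ≤ (J ∩ (A ∩ B)).card := by
    rw [← hIcard]; exact Finset.card_le_card hIsub
  have hJle : rkOf Indep (A ∪ B) ≤ J.card := hJcard.ge
  omega

end rkLemmas

section polyBasic
variable {Indep : Finset α → Prop}

theorem fsum_incVec (I F : Finset α) : fsum (incVec I) F = ((F ∩ I).card : ℝ) := by
  classical
  unfold fsum incVec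
  rw [Finset.sum_boole, Finset.filter_mem_eq_inter]

theorem incVec_mem_polyOf
    (hsub : ∀ ⦃I J : Finset α⦄, Indep J → I ⊆ J → Indep I)
    {I : Finset α} (hI : Indep I) : incVec I ∈ polyOf Indep := by
  constructor
  · intro F
    rw [fsum_incVec]
    exact_mod_cast card_le_rkOf (hsub hI Finset.inter_subset_right)
      Finset.inter_subset_left
  · intro e
    unfold incVec
    positivity

theorem fsum_add (x y : α → ℝ) (F : Finset α) :
    fsum (x + y) F = fsum x F + fsum y F := Finset.sum_add_distrib

theorem fsum_smul (a : ℝ) (x : α → ℝ) (F : Finset α) :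
    fsum (a • x) F = a * fsum x F := by
  unfold fsum; rw [Finset.mul_sum]; rfl

theorem polyOf_convex : Convex ℝ (polyOf Indep) := by
  intro x hx y hy a b ha hb hab
  constructor
  · intro F
    rw [fsum_add, fsum_smul, fsum_smul]
    calc a * fsum x F + b * fsum y F ≤ a * (rkOf Indep F : ℝ) + b * (rkOf Indep F : ℝ) := by
          gcongr
          exacts [hx.1 F, hy.1 F]
      _ = (rkOf Indep F : ℝ) := by rw [← add_mul, hab, one_mul]
  · intro e
    have := hx.2 e; have := hy.2 e
    have : (a • x + b • y) e = a * x e + b * y e := rfl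
    rw [this]; positivity

theorem polyOf_le_one {x : α → ℝ} (hx : x ∈ polyOf Indep) (e : α) : x e ≤ 1 := by
  have h := hx.1 {e}
  have : fsum x {e} = x e := Finset.sum_singleton _ _
  rw [this] at h
  calc x e ≤ (rkOf Indep {e} : ℝ) := h
    _ ≤ ((Finset.card {e} : ℕ) : ℝ) := by exact_mod_cast rkOf_le_card {e}
    _ = 1 := by simp

theorem polyOf_isClosed : IsClosed (polyOf Indep) := by
  have h1 : polyOf Indep = (⋂ F : Finset α, {x : α → ℝ | fsum x F ≤ (rkOf Indep F : ℝ)}) ∩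
      (⋂ e : α, {x : α → ℝ | 0 ≤ x e}) := by
    ext x; simp [polyOf, Set.mem_iInter]
  rw [h1]
  apply IsClosed.inter
  · exact isClosed_iInter fun F => isClosed_le (by continuity) continuous_const
  · exact isClosed_iInter fun e => isClosed_le continuous_const (continuous_apply e)

theorem polyOf_isCompact : IsCompact (polyOf Indep) := by
  have hsub : polyOf Indep ⊆ Set.Icc (0 : α → ℝ) 1 := by
    intro x hx
    constructor
    · intro e; exact hx.2 e
    · intro e; exact polyOf_le_one hx e
  exact (isCompact_Icc).of_isClosed_subset polyOf_isClosed hsub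

end polyBasic

section pert
variable {Indep : Finset α → Prop} {x d : α → ℝ}

theorem fsum_abs_le (d : α → ℝ) (F : Finset α) :
    |fsum d F| ≤ ∑ e, |d e| := by
  calc |fsum d F| ≤ ∑ e ∈ F, |d e| := Finset.abs_sum_le_sum_abs _ _
    _ ≤ ∑ e, |d e| := Finset.sum_le_sum_of_subset_of_nonneg (Finset.subset_univ F)
        (fun e _ _ => abs_nonneg _)

/-- the perturbation bound -/
noncomputable def pertEps (Indep : Finset α → Prop) (x d : α → ℝ) : ℝ :=
  let B : ℝ := (∑ e, |d e|) + 1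
  min ((insert (1:ℝ) ((Finset.univ.powerset).image
        (fun F => if fsum x F = (rkOf Indep F : ℝ) then 1
                  else ((rkOf Indep F : ℝ) - fsum x F)/B))).min' (by simp))
      ((insert (1:ℝ) (Finset.univ.image
        (fun e => if x e = 0 then 1 else x e / B))).min' (by simp))

theorem pertEps_pos (hx : x ∈ polyOf Indep) : 0 < pertEps Indep x d := by
  have hB : (0:ℝ) < (∑ e, |d e|) + 1 := by positivity
  apply lt_min
  · apply (Finset.lt_min'_iff _ _).mpr
    intro y hy
    simp only [Finset.mem_insert, Finset.mem_image] at hy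
    rcases hy with rfl | ⟨F, _, rfl⟩
    · norm_num
    · split_ifs with h
      · norm_num
      · have := hx.1 F
        have hlt : fsum x F < (rkOf Indep F : ℝ) := lt_of_le_of_ne this h
        exact div_pos (by linarith) hB
  · apply (Finset.lt_min'_iff _ _).mpr
    intro y hy
    simp only [Finset.mem_insert, Finset.mem_image] at hy
    rcases hy with rfl | ⟨e, _, rfl⟩
    · norm_num
    · split_ifs with h
      · norm_num
      · have := hx.2 e
        have hlt : 0 < x e := lt_of_le_of_ne this (Ne.symm h)
        positivity

theorem pertEps_le_slack (F : Finset α) (hF : fsum x F ≠ (rkOf Indep F : ℝ)) :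
    pertEps Indep x d * ((∑ e, |d e|) + 1) ≤ (rkOf Indep F : ℝ) - fsum x F := by
  have hB : (0:ℝ) < (∑ e, |d e|) + 1 := by positivity
  have h1 : pertEps Indep x d ≤ ((rkOf Indep F : ℝ) - fsum x F)/((∑ e, |d e|) + 1) := by
    refine le_trans (min_le_left _ _) (Finset.min'_le _ _ ?_)
    simp only [Finset.mem_insert, Finset.mem_image]
    right
    exact ⟨F, Finset.mem_powerset.mpr (Finset.subset_univ F), by rw [if_neg hF]⟩
  calc pertEps Indep x d * ((∑ e, |d e|) + 1)
      ≤ (((rkOf Indep F : ℝ) - fsum x F)/((∑ e, |d e|) + 1)) * ((∑ e, |d e|) + 1) := by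
        exact mul_le_mul_of_nonneg_right h1 hB.le
    _ = (rkOf Indep F : ℝ) - fsum x F := div_mul_cancel₀ _ hB.ne'

theorem pertEps_le_coord (e : α) (he : x e ≠ 0) :
    pertEps Indep x d * ((∑ e, |d e|) + 1) ≤ x e := by
  have hB : (0:ℝ) < (∑ e, |d e|) + 1 := by positivity
  have h1 : pertEps Indep x d ≤ x e / ((∑ e, |d e|) + 1) := by
    refine le_trans (min_le_right _ _) (Finset.min'_le _ _ ?_)
    simp only [Finset.mem_insert, Finset.mem_image]
    right
    exact ⟨e, Finset.mem_univ e, by rw [if_neg he]⟩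
  calc pertEps Indep x d * ((∑ e, |d e|) + 1)
      ≤ (x e/((∑ e, |d e|) + 1)) * ((∑ e, |d e|) + 1) := mul_le_mul_of_nonneg_right h1 hB.le
    _ = x e := div_mul_cancel₀ _ hB.ne'

theorem pert_mem (hx : x ∈ polyOf Indep)
    (hd : ∀ F : Finset α, fsum x F = (rkOf Indep F : ℝ) → fsum d F = 0)
    (hdz : ∀ e, x e = 0 → d e = 0) :
    x + pertEps Indep x d • d ∈ polyOf Indep := by
  set ε := pertEps Indep x d with hε
  have hεpos : 0 < ε := pertEps_pos hx
  have hB : (0:ℝ) < (∑ e, |d e|) + 1 := by positivity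
  constructor
  · intro F
    have hsum : fsum (x + ε • d) F = fsum x F + ε * fsum d F := by
      unfold fsum
      simp only [Pi.add_apply, Pi.smul_apply, smul_eq_mul, Finset.sum_add_distrib,
        Finset.mul_sum]
    by_cases hF : fsum x F = (rkOf Indep F : ℝ)
    · rw [hsum, hd F hF, mul_zero, add_zero, hF]
    · rw [hsum]
      have h1 : ε * fsum d F ≤ ε * |fsum d F| := by
        apply mul_le_mul_of_nonneg_left (le_abs_self _) hεpos.le
      have h2 : ε * |fsum d F| ≤ ε * ((∑ e, |d e|) + 1) := by
        apply mul_le_mul_of_nonneg_left _ hεpos.le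
        exact le_trans (fsum_abs_le d F) (by linarith)
      have h3 := pertEps_le_slack (d := d) F hF
      linarith
  · intro e
    by_cases he : x e = 0
    · simp [he, hdz e he]
    · have h1 : ε * |d e| ≤ ε * ((∑ e, |d e|) + 1) := by
        apply mul_le_mul_of_nonneg_left _ hεpos.le
        have : |d e| ≤ ∑ e, |d e| :=
          Finset.single_le_sum (fun e _ => abs_nonneg (d e)) (Finset.mem_univ e)
        linarith
      have h2 := pertEps_le_coord (Indep := Indep) (d := d) e he
      have h3 : -(d e) ≤ |d e| := neg_le_abs _
      have : (x + ε • d) e = x e + ε * d e := rfl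
      rw [this]
      nlinarith [abs_nonneg (d e), hεpos.le]

theorem not_extreme_of_dir (hx : x ∈ polyOf Indep)
    (hd : ∀ F : Finset α, fsum x F = (rkOf Indep F : ℝ) → fsum d F = 0)
    (hdz : ∀ e, x e = 0 → d e = 0) (hd0 : d ≠ 0) :
    x ∉ Set.extremePoints ℝ (polyOf Indep) := by
  intro hext
  rw [mem_extremePoints] at hext
  set ε := pertEps Indep x d with hε
  have hεpos : 0 < ε := pertEps_pos (d := d) hx
  have hy : x + ε • d ∈ polyOf Indep := pert_mem hx hd hdz
  have hdneg : ∀ F : Finset α, fsum x F = (rkOf Indep F : ℝ) → fsum (-d) F = 0 := by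
    intro F hF
    have : fsum (-d) F = -fsum d F := by unfold fsum; simp
    rw [this, hd F hF, neg_zero]
  have hdzneg : ∀ e, x e = 0 → (-d) e = 0 := fun e he => by simp [hdz e he]
  have hz' : x + pertEps Indep x (-d) • (-d) ∈ polyOf Indep := pert_mem hx hdneg hdzneg
  have habs : pertEps Indep x (-d) = pertEps Indep x d := by
    unfold pertEps
    simp only [Pi.neg_apply, abs_neg]
  rw [habs] at hz'
  have hmid : x ∈ openSegment ℝ (x + ε • d) (x + ε • (-d)) := by
    refine ⟨1/2, 1/2, by norm_num, by norm_num, by norm_num, ?_⟩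
    module
  obtain ⟨h1, -⟩ := hext.2 _ hy _ hz' hmid
  apply hd0
  have h2 : ε • d = 0 := by
    have := congrArg (· - x) h1
    simpa using this
  rcases smul_eq_zero.mp h2 with h | h
  · exact absurd h hεpos.ne'
  · exact h

end pert

section extreme
variable {Indep : Finset α → Prop} {x : α → ℝ}

theorem tight_union_inter
    (hem : Indep ∅)
    (hsub : ∀ ⦃I J : Finset α⦄, Indep J → I ⊆ J → Indep I)
    (hex : ∀ ⦃I J : Finset α⦄, Indep I → Indep J → I.card < J.card →
      ∃ e ∈ J \ I, Indep (insert e I))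
    (hx : x ∈ polyOf Indep) {A B : Finset α}
    (hA : fsum x A = (rkOf Indep A : ℝ)) (hB : fsum x B = (rkOf Indep B : ℝ)) :
    fsum x (A ∪ B) = (rkOf Indep (A ∪ B) : ℝ) ∧
      fsum x (A ∩ B) = (rkOf Indep (A ∩ B) : ℝ) := by
  have s1 := hx.1 (A ∪ B)
  have s2 := hx.1 (A ∩ B)
  have s3 : ((rkOf Indep (A ∪ B) : ℝ) + (rkOf Indep (A ∩ B) : ℝ)) ≤
      (rkOf Indep A : ℝ) + (rkOf Indep B : ℝ) := by
    exact_mod_cast rkOf_submod hem hsub hex A B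
  have s4 : fsum x (A ∪ B) + fsum x (A ∩ B) = fsum x A + fsum x B :=
    Finset.sum_union_inter
  constructor <;> linarith

theorem tight_empty (hx : x ∈ polyOf Indep) : fsum x ∅ = (rkOf Indep ∅ : ℝ) := by
  have h1 : rkOf Indep ∅ = 0 := Nat.le_zero.mp (by simpa using rkOf_le_card (Indep := Indep) ∅)
  simp [fsum, h1]

theorem tight_sup
    (hem : Indep ∅)
    (hsub : ∀ ⦃I J : Finset α⦄, Indep J → I ⊆ J → Indep I)
    (hex : ∀ ⦃I J : Finset α⦄, Indep I → Indep J → I.card < J.card →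
      ∃ e ∈ J \ I, Indep (insert e I))
    (hx : x ∈ polyOf Indep) (s : Finset (Finset α))
    (hs : ∀ t ∈ s, fsum x t = (rkOf Indep t : ℝ)) :
    fsum x (s.sup id) = (rkOf Indep (s.sup id) : ℝ) := by
  induction s using Finset.cons_induction with
  | empty => simpa using tight_empty hx
  | cons a s ha ih =>
    rw [Finset.sup_cons]
    have h1 : fsum x a = _ := hs a (Finset.mem_cons_self a s)
    have h2 := ih (fun t ht => hs t (Finset.mem_cons_of_mem ht))
    exact (tight_union_inter hem hsub hex hx h1 h2).1

theorem tight_inf'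
    (hem : Indep ∅)
    (hsub : ∀ ⦃I J : Finset α⦄, Indep J → I ⊆ J → Indep I)
    (hex : ∀ ⦃I J : Finset α⦄, Indep I → Indep J → I.card < J.card →
      ∃ e ∈ J \ I, Indep (insert e I))
    (hx : x ∈ polyOf Indep) (s : Finset (Finset α)) (hne : s.Nonempty)
    (hs : ∀ t ∈ s, fsum x t = (rkOf Indep t : ℝ)) :
    fsum x (s.inf' hne id) = (rkOf Indep (s.inf' hne id) : ℝ) := by
  induction hne using Finset.Nonempty.cons_induction with
  | singleton a => simpa using hs a (Finset.mem_singleton_self a)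
  | cons a s ha hne ih =>
    rw [Finset.inf'_cons]
    have h1 : fsum x a = _ := hs a (Finset.mem_cons_self a s)
    have h2 := ih (fun t ht => hs t (Finset.mem_cons_of_mem ht))
    exact (tight_union_inter hem hsub hex hx h1 h2).2

theorem exists_int_sum (x : α → ℝ) :
    ∀ s : Finset α, (∀ e ∈ s, ∃ m : ℤ, x e = (m : ℝ)) → ∃ n : ℤ, ∑ e ∈ s, x e = (n : ℝ) := by
  intro s
  induction s using Finset.cons_induction with
  | empty => exact fun _ => ⟨0, by simp⟩
  | cons a s ha ih =>
    intro h
    obtain ⟨m, hm⟩ := h a (Finset.mem_cons_self a s)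
    obtain ⟨n, hn⟩ := ih (fun e he => h e (Finset.mem_cons_of_mem he))
    exact ⟨m + n, by rw [Finset.sum_cons, hm, hn]; push_cast; ring⟩

open Classical in
theorem extreme_zero_one
    (hem : Indep ∅)
    (hsub : ∀ ⦃I J : Finset α⦄, Indep J → I ⊆ J → Indep I)
    (hex : ∀ ⦃I J : Finset α⦄, Indep I → Indep J → I.card < J.card →
      ∃ e ∈ J \ I, Indep (insert e I))
    (hxe : x ∈ Set.extremePoints ℝ (polyOf Indep)) (f : α) :
    x f = 0 ∨ x f = 1 := by
  have hx : x ∈ polyOf Indep := hxe.1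
  by_contra hf
  push_neg at hf
  obtain ⟨hf0, hf1⟩ := hf
  have hfpos : 0 < x f := lt_of_le_of_ne (hx.2 f) (Ne.symm hf0)
  have hflt : x f < 1 := lt_of_le_of_ne (polyOf_le_one hx f) hf1
  by_cases hcase : ∃ F : Finset α, fsum x F = (rkOf Indep F : ℝ) ∧ f ∈ F
  · obtain ⟨F₀, hF₀t, hF₀f⟩ := hcase
    set sF : Finset (Finset α) :=
      Finset.univ.filter (fun F => fsum x F = (rkOf Indep F : ℝ) ∧ f ∈ F) with hsF
    have hne : sF.Nonempty := ⟨F₀, by simp [hsF, hF₀t, hF₀f]⟩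
    set D : Finset α := sF.inf' hne id with hD
    have hDt : fsum x D = (rkOf Indep D : ℝ) := by
      apply tight_inf' hem hsub hex hx
      intro t ht
      simp only [hsF, Finset.mem_filter] at ht
      exact ht.2.1
    have hfD : f ∈ D := by
      have h1 : ({f} : Finset α) ≤ sF.inf' hne id :=
        Finset.le_inf' hne id (fun t ht => by
          have h2 := (Finset.mem_filter.mp ht).2.2
          simpa using Finset.singleton_subset_iff.mpr h2)
      exact Finset.singleton_subset_iff.mp h1
    have hDsub : ∀ F : Finset α, fsum x F = (rkOf Indep F : ℝ) → f ∈ F → D ⊆ F := by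
      intro F h1 h2
      have h3 : sF.inf' hne id ≤ id F :=
        Finset.inf'_le id (Finset.mem_filter.mpr ⟨Finset.mem_univ F, h1, h2⟩)
      exact h3
    set sG : Finset (Finset α) :=
      Finset.univ.filter (fun F => fsum x F = (rkOf Indep F : ℝ) ∧ f ∉ F) with hsG
    set U : Finset α := sG.sup id with hU
    have hUt : fsum x U = (rkOf Indep U : ℝ) := by
      apply tight_sup hem hsub hex hx
      intro t ht
      simp only [hsG, Finset.mem_filter] at ht
      exact ht.2.1
    have hUsub : ∀ F : Finset α, fsum x F = (rkOf Indep F : ℝ) → f ∉ F → F ⊆ U := by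
      intro F h1 h2
      have h3 : id F ≤ sG.sup id :=
        Finset.le_sup (Finset.mem_filter.mpr ⟨Finset.mem_univ F, h1, h2⟩)
      exact h3
    have hmemU : ∀ g, g ∈ U → ∃ F : Finset α,
        fsum x F = (rkOf Indep F : ℝ) ∧ f ∉ F ∧ g ∈ F := by
      intro g hg
      rw [hU, Finset.mem_sup] at hg
      obtain ⟨v, hv, hgv⟩ := hg
      simp only [hsG, Finset.mem_filter] at hv
      exact ⟨v, hv.2.1, hv.2.2, hgv⟩
    have hfU : f ∉ U := by
      intro h
      obtain ⟨F, _, h2, h3⟩ := hmemU f h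
      exact h2 h3
    have hDUt : fsum x (D ∩ U) = (rkOf Indep (D ∩ U) : ℝ) :=
      (tight_union_inter hem hsub hex hx hDt hUt).2
    have hsplit : fsum x (D \ U) + fsum x (D ∩ U) = fsum x D := by
      unfold fsum
      rw [← Finset.sdiff_inter_self_left D U]
      exact Finset.sum_sdiff Finset.inter_subset_left
    have hAint : fsum x (D \ U) = ((rkOf Indep D : ℤ) - (rkOf Indep (D ∩ U) : ℤ) : ℤ) := by
      push_cast
      linarith
    have hfA : f ∈ D \ U := Finset.mem_sdiff.mpr ⟨hfD, hfU⟩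
    have hg : ∃ g ∈ D \ U, g ≠ f ∧ x g ≠ 0 ∧ x g ≠ 1 := by
      by_contra hcon
      push_neg at hcon
      have hint : ∀ e ∈ (D \ U).erase f, ∃ m : ℤ, x e = (m : ℝ) := by
        intro e he
        have he' : e ∈ D \ U := Finset.mem_of_mem_erase he
        have hne' : e ≠ f := Finset.ne_of_mem_erase he
        by_cases h : x e = 0
        · exact ⟨0, by simp [h]⟩
        · exact ⟨1, by simp [hcon e he' hne' h]⟩
      obtain ⟨n, hn⟩ := exists_int_sum x _ hint
      have hsum : ∑ e ∈ (D \ U).erase f, x e + x f = ∑ e ∈ D \ U, x e :=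
        Finset.sum_erase_add _ _ hfA
      have hxf : x f = (((rkOf Indep D : ℤ) - (rkOf Indep (D ∩ U) : ℤ) - n : ℤ) : ℝ) := by
        have : fsum x (D \ U) = ∑ e ∈ D \ U, x e := rfl
        push_cast
        push_cast at hAint
        linarith [hAint, hn, hsum]
      set m : ℤ := (rkOf Indep D : ℤ) - (rkOf Indep (D ∩ U) : ℤ) - n with hm
      rw [hxf] at hfpos hflt
      have h1 : (0:ℤ) < m := by exact_mod_cast hfpos
      have h2 : m < 1 := by exact_mod_cast hflt
      omega
    obtain ⟨g, hgA, hgf, hg0, hg1⟩ := hg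
    have hgD : g ∈ D := (Finset.mem_sdiff.mp hgA).1
    have hgU : g ∉ U := (Finset.mem_sdiff.mp hgA).2
    have hiff : ∀ F : Finset α, fsum x F = (rkOf Indep F : ℝ) → (f ∈ F ↔ g ∈ F) := by
      intro F hF
      constructor
      · intro hfF; exact hDsub F hF hfF hgD
      · intro hgF
        by_contra hfF
        exact hgU (hUsub F hF hfF hgF)
    set d : α → ℝ := incVec {f} - incVec {g} with hd
    have hdval : ∀ e, d e = (if e = f then 1 else 0) - (if e = g then 1 else 0) := by
      intro e; simp [hd, incVec]
    apply not_extreme_of_dir (x := x) (d := d) hx ?_ ?_ ?_ hxe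
    · intro F hF
      have hsum : fsum d F = fsum (incVec {f}) F - fsum (incVec {g}) F := by
        unfold fsum; simp [hd]
      rw [hsum]
      have h1 : fsum (incVec {f}) F = if f ∈ F then 1 else 0 := by
        unfold fsum incVec
        simp only [Finset.mem_singleton]
        rw [Finset.sum_ite_eq' F f (fun _ => (1:ℝ))]
      have h2 : fsum (incVec {g}) F = if g ∈ F then 1 else 0 := by
        unfold fsum incVec
        simp only [Finset.mem_singleton]
        rw [Finset.sum_ite_eq' F g (fun _ => (1:ℝ))]
      rw [h1, h2]
      rcases (hiff F hF) with ⟨hfg, hgf'⟩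
      by_cases h : f ∈ F
      · rw [if_pos h, if_pos (hfg h)]; ring
      · rw [if_neg h, if_neg (fun hh => h (hgf' hh))]; ring
    · intro e he
      rw [hdval]
      have hef : e ≠ f := fun h => hf0 (h ▸ he)
      have heg : e ≠ g := fun h => hg0 (h ▸ he)
      rw [if_neg hef, if_neg heg]; ring
    · intro h
      have := congrFun h f
      rw [hdval] at this
      simp only [if_pos rfl, if_neg (Ne.symm hgf), Pi.zero_apply] at this
      norm_num at this
  · push_neg at hcase
    set d : α → ℝ := incVec {f} with hd
    apply not_extreme_of_dir (x := x) (d := d) hx ?_ ?_ ?_ hxe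
    · intro F hF
      have hfF : f ∉ F := fun h => hcase F hF h
      unfold fsum
      apply Finset.sum_eq_zero
      intro e he
      have : e ≠ f := fun h => hfF (h ▸ he)
      simp [hd, incVec, this]
    · intro e he
      have : e ≠ f := fun h => hf0 (h ▸ he)
      simp [hd, incVec, this]
    · intro h
      have := congrFun h f
      simp [hd, incVec] at this

theorem extreme_is_incVec
    (hem : Indep ∅)
    (hsub : ∀ ⦃I J : Finset α⦄, Indep J → I ⊆ J → Indep I)
    (hex : ∀ ⦃I J : Finset α⦄, Indep I → Indep J → I.card < J.card →
      ∃ e ∈ J \ I, Indep (insert e I))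
    (hxe : x ∈ Set.extremePoints ℝ (polyOf Indep)) :
    ∃ I : Finset α, Indep I ∧ x = incVec I := by
  classical
  have hx : x ∈ polyOf Indep := hxe.1
  have h01 := extreme_zero_one hem hsub hex hxe
  set I : Finset α := Finset.univ.filter (fun e => x e = 1) with hI
  have hxI : x = incVec I := by
    funext e
    rcases h01 e with h | h
    · have : e ∉ I := by simp [hI]; intro hh; rw [hh] at h; norm_num at h
      simp [incVec, this, h]
    · have : e ∈ I := by simp [hI, h]
      simp [incVec, this, h]
  refine ⟨I, ?_, hxI⟩
  have hcard : fsum x I = (I.card : ℝ) := by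
    unfold fsum
    rw [Finset.sum_congr rfl (fun e he => by simp only [hI, Finset.mem_filter] at he; exact he.2)]
    simp
  have h1 : (I.card : ℝ) ≤ (rkOf Indep I : ℝ) := hcard ▸ hx.1 I
  have h2 : rkOf Indep I ≤ I.card := rkOf_le_card I
  have h3 : rkOf Indep I = I.card := le_antisymm h2 (by exact_mod_cast h1)
  obtain ⟨B, hBI, hBind, hBcard⟩ := exists_rkOf_basis hem I
  have : B = I := Finset.eq_of_subset_of_card_le hBI (by omega)
  exact this ▸ hBind

end extreme

theorem corePoly {Indep : Finset α → Prop}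
    (hem : Indep ∅)
    (hsub : ∀ ⦃I J : Finset α⦄, Indep J → I ⊆ J → Indep I)
    (hex : ∀ ⦃I J : Finset α⦄, Indep I → Indep J → I.card < J.card →
      ∃ e ∈ J \ I, Indep (insert e I)) :
    convexHull ℝ {x : α → ℝ | ∃ I : Finset α, Indep I ∧ x = incVec I} = polyOf Indep := by
  set S : Set (α → ℝ) := {x : α → ℝ | ∃ I : Finset α, Indep I ∧ x = incVec I} with hS
  have hSfin : S.Finite := by
    apply Set.Finite.subset (Set.finite_range (incVec (α := α)))
    rintro x ⟨I, -, rfl⟩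
    exact ⟨I, rfl⟩
  apply le_antisymm
  · apply convexHull_min _ polyOf_convex
    rintro x ⟨I, hI, rfl⟩
    exact incVec_mem_polyOf hsub hI
  · have hKM := closure_convexHull_extremePoints polyOf_isCompact
      (polyOf_convex (Indep := Indep))
    have hsub2 : Set.extremePoints ℝ (polyOf Indep) ⊆ S := by
      intro x hx
      exact extreme_is_incVec hem hsub hex hx
    calc polyOf Indep = closure (convexHull ℝ (Set.extremePoints ℝ (polyOf Indep))) := hKM.symm
      _ ⊆ closure (convexHull ℝ S) := closure_mono (convexHull_mono hsub2)
      _ = convexHull ℝ S := IsClosed.closure_eq (hSfin.isCompact_convexHull ℝ).isClosed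

/-- the truncated rank -/
theorem rkOf_trunc {Indep : Finset α → Prop}
    (hem : Indep ∅)
    (hsub : ∀ ⦃I J : Finset α⦄, Indep J → I ⊆ J → Indep I)
    (k : ℕ) (F : Finset α) :
    rkOf (fun I => Indep I ∧ I.card ≤ k) F = min (rkOf Indep F) k := by
  classical
  apply le_antisymm
  · apply Finset.sup_le
    intro I hI
    simp only [Finset.mem_filter, Finset.mem_powerset] at hI
    exact le_min (card_le_rkOf hI.2.1 hI.1) hI.2.2
  · obtain ⟨I, hIF, hI, hIcard⟩ := exists_rkOf_basis hem F
    obtain ⟨J, hJI, hJcard⟩ := Finset.exists_subset_card_eq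
      (show min (rkOf Indep F) k ≤ I.card by omega)
    have := card_le_rkOf (Indep := fun I => Indep I ∧ I.card ≤ k)
      ⟨hsub hI hJI, by omega⟩ (hJI.trans hIF)
    omega

theorem FinMatroid.r_eq_rkOf (M : FinMatroid α) : M.r = rkOf M.Indep := rfl

end MatroidPolytopeAux

/-- linear description of the polytope of independent sets of
cardinality at most k. -/
theorem truncation_polytope_eq {α : Type*} [Fintype α] [DecidableEq α]
    (M : FinMatroid α) (k : ℕ) :
    convexHull ℝ {x : α → ℝ | ∃ I : Finset α, M.Indep I ∧ I.card ≤ k ∧ x = incVec I} =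
      {x : α → ℝ | (∀ F : Finset α, F ≠ ∅ → fsum x F ≤ (M.r F : ℝ)) ∧
        fsum x Finset.univ ≤ (k : ℝ) ∧ (∀ e : α, 0 ≤ x e)} := by
  classical
  set Ind' : Finset α → Prop := fun I => M.Indep I ∧ I.card ≤ k with hInd'
  have hem' : Ind' ∅ := ⟨M.empty_indep, by simp⟩
  have hsub' : ∀ ⦃I J : Finset α⦄, Ind' J → I ⊆ J → Ind' I := by
    intro I J hJ hIJ
    exact ⟨M.subset_indep hJ.1 hIJ, le_trans (Finset.card_le_card hIJ) hJ.2⟩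
  have hex' : ∀ ⦃I J : Finset α⦄, Ind' I → Ind' J → I.card < J.card →
      ∃ e ∈ J \ I, Ind' (insert e I) := by
    intro I J hI hJ hlt
    obtain ⟨e, he, heI⟩ := M.exchange hI.1 hJ.1 hlt
    refine ⟨e, he, heI, ?_⟩
    have : (insert e I).card ≤ I.card + 1 := Finset.card_insert_le e I
    omega
  have hL : {x : α → ℝ | ∃ I : Finset α, M.Indep I ∧ I.card ≤ k ∧ x = incVec I} =
      {x : α → ℝ | ∃ I : Finset α, Ind' I ∧ x = incVec I} := by
    ext x
    simp only [Set.mem_setOf_eq, hInd', and_assoc]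
  rw [hL, corePoly hem' hsub' hex']
  have hrk : ∀ F : Finset α, rkOf Ind' F = min (M.r F) k := by
    intro F
    rw [hInd', rkOf_trunc M.empty_indep M.subset_indep k F, M.r_eq_rkOf]
  ext x
  simp only [polyOf, Set.mem_setOf_eq]
  constructor
  · rintro ⟨h1, h2⟩
    refine ⟨?_, ?_, h2⟩
    · intro F hF
      calc fsum x F ≤ (rkOf Ind' F : ℝ) := h1 F
        _ ≤ (M.r F : ℝ) := by
            rw [hrk F]
            exact_mod_cast min_le_left _ _
    · calc fsum x Finset.univ ≤ (rkOf Ind' Finset.univ : ℝ) := h1 Finset.univ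
        _ ≤ (k : ℝ) := by
            rw [hrk Finset.univ]
            exact_mod_cast min_le_right _ _
  · rintro ⟨h1, h2, h3⟩
    refine ⟨?_, h3⟩
    intro F
    rw [hrk F]
    push_cast [Nat.cast_min]
    apply le_min
    · rcases eq_or_ne F ∅ with rfl | hne
      · have : fsum x ∅ = 0 := Finset.sum_empty
        rw [this]
        positivity
      · exact h1 F hne
    · calc fsum x F ≤ fsum x Finset.univ := by
            unfold fsum
            exact Finset.sum_le_sum_of_subset_of_nonneg (Finset.subset_univ F)
              (fun e _ _ => h3 e)
        _ ≤ (k : ℝ) := h2
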